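/- arXiv:0712.2549 — 5 statements merged into one kernel-verified Lean document; each statement's English description precedes it below -/
import Mathlib

section
/- Let B be a trimmed right double extension of A with data (P, σ) and p₁₂ ≠ 0. Then for every r ∈ A the following two identities hold in B: (p₁₁y₁ − y₂)·σ₁₁(r) + p₁₂·y₁·σ₂₁(r) = det σ(r)·(p₁₁y₁ − y₂), and (p₁₁y₁ − y₂)·σ₁₂(r) + p₁₂·y₁·σ₂₂(r) = det σ(r)·p₁₂·y₁. (These identities say that the left B-module map g : B → B ⊕ B, c ↦ (c(p₁₁y₁ − y₂), c·p₁₂y₁), is a map of (B, A)-bimodules from B twisted on the right by det σ to (B ⊕ B) with right A-action (a, b) * r = (aσ₁₁(r) + bσ₂₁(r), aσ₁₂(r) + bσ₂₂(r)).) -/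
/-- A right double extension `B` of a subalgebra `A ⊆ B` with DE-data `(P, σ, δ, τ)`. -/
structure RightDoubleExtension (k : Type*) [Field k] {B : Type*} [Ring B] [Algebra k B]
    (A : Subalgebra k B) where
  y₁ : B
  y₂ : B
  σ₁₁ : A →ₗ[k] A
  σ₁₂ : A →ₗ[k] A
  σ₂₁ : A →ₗ[k] A
  σ₂₂ : A →ₗ[k] A
  δ₁ : A →ₗ[k] A
  δ₂ : A →ₗ[k] A
  p₁₂ : k
  p₁₁ : k
  τ₁ : A
  τ₂ : A
  τ₀ : A
  R1 : y₂ * y₁ = p₁₂ • (y₁ * y₂) + p₁₁ • (y₁ * y₁)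
      + (τ₁ : B) * y₁ + (τ₂ : B) * y₂ + (τ₀ : B)
  R2₁ : ∀ r : A, y₁ * (r : B) = (σ₁₁ r : B) * y₁ + (σ₁₂ r : B) * y₂ + (δ₁ r : B)
  R2₂ : ∀ r : A, y₂ * (r : B) = (σ₂₁ r : B) * y₁ + (σ₂₂ r : B) * y₂ + (δ₂ r : B)
  basis : ∀ b : B, ∃! f : ℕ × ℕ →₀ A,
      b = f.sum fun n a => (a : B) * (y₁ ^ n.1 * y₂ ^ n.2)


/-- The determinant of `σ`: `det σ(r) = −p₁₁σ₁₂(σ₁₁(r)) + σ₂₂(σ₁₁(r)) − p₁₂σ₁₂(σ₂₁(r))`. -/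
def RightDoubleExtension.detσ {k : Type*} [Field k] {B : Type*} [Ring B] [Algebra k B]
    {A : Subalgebra k B} (E : RightDoubleExtension k A) : A → A :=
  fun r => -(E.p₁₁ • E.σ₁₂ (E.σ₁₁ r)) + E.σ₂₂ (E.σ₁₁ r) - E.p₁₂ • E.σ₁₂ (E.σ₂₁ r)

namespace RightDoubleExtension

variable {k : Type*} [Field k] {B : Type*} [Ring B] [Algebra k B]
    {A : Subalgebra k B} (E : RightDoubleExtension k A)

lemma sum3 (x y z : A) :
    ((Finsupp.single ((2:ℕ),(0:ℕ)) x + Finsupp.single (1,1) y + Finsupp.single (0,2) z).sum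
      fun n a => (a : B) * (E.y₁ ^ n.1 * E.y₂ ^ n.2)) =
    (x : B) * (E.y₁ ^ 2 * E.y₂ ^ 0) + (y : B) * (E.y₁ ^ 1 * E.y₂ ^ 1)
      + (z : B) * (E.y₁ ^ 0 * E.y₂ ^ 2) := by
  rw [Finsupp.sum_add_index' (by simp) (by simp [add_mul]),
      Finsupp.sum_add_index' (by simp) (by simp [add_mul]),
      Finsupp.sum_single_index (by simp), Finsupp.sum_single_index (by simp),
      Finsupp.sum_single_index (by simp)]

lemma coeff_unique {a b c a' b' c' : A}
    (h : (a : B) * (E.y₁ ^ 2 * E.y₂ ^ 0) + (b : B) * (E.y₁ ^ 1 * E.y₂ ^ 1)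
        + (c : B) * (E.y₁ ^ 0 * E.y₂ ^ 2)
      = (a' : B) * (E.y₁ ^ 2 * E.y₂ ^ 0) + (b' : B) * (E.y₁ ^ 1 * E.y₂ ^ 1)
        + (c' : B) * (E.y₁ ^ 0 * E.y₂ ^ 2)) :
    a = a' ∧ b = b' ∧ c = c' := by
  obtain ⟨f, -, hu⟩ := E.basis ((a : B) * (E.y₁ ^ 2 * E.y₂ ^ 0)
    + (b : B) * (E.y₁ ^ 1 * E.y₂ ^ 1) + (c : B) * (E.y₁ ^ 0 * E.y₂ ^ 2))
  have h1 := hu (Finsupp.single ((2:ℕ),(0:ℕ)) a + Finsupp.single (1,1) b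
    + Finsupp.single (0,2) c) ((E.sum3 a b c).symm)
  have h2 := hu (Finsupp.single ((2:ℕ),(0:ℕ)) a' + Finsupp.single (1,1) b'
    + Finsupp.single (0,2) c') (h.trans (E.sum3 a' b' c').symm)
  have hFG := h1.trans h2.symm
  refine ⟨?_, ?_, ?_⟩
  · have := congrArg (fun g => g ((2:ℕ),(0:ℕ))) hFG
    simpa [Finsupp.single_apply, Prod.ext_iff] using this
  · have := congrArg (fun g => g ((1:ℕ),(1:ℕ))) hFG
    simpa [Finsupp.single_apply, Prod.ext_iff] using this
  · have := congrArg (fun g => g ((0:ℕ),(2:ℕ))) hFG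
    simpa [Finsupp.single_apply, Prod.ext_iff] using this


section trimmed
variable (hδ₁ : E.δ₁ = 0) (hδ₂ : E.δ₂ = 0) (hτ₁ : E.τ₁ = 0) (hτ₂ : E.τ₂ = 0) (hτ₀ : E.τ₀ = 0)
include hτ₁ hτ₂ hτ₀ in
lemma hR1 : E.y₂ * E.y₁ = E.p₁₂ • (E.y₁ * E.y₂) + E.p₁₁ • (E.y₁ * E.y₁) := by
  rw [E.R1, hτ₁, hτ₂, hτ₀]; simp

include hδ₁ in
lemma hR2₁ (r : A) : E.y₁ * (r : B) = (E.σ₁₁ r : B) * E.y₁ + (E.σ₁₂ r : B) * E.y₂ := by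
  rw [E.R2₁, hδ₁]; simp

include hδ₂ in
lemma hR2₂ (r : A) : E.y₂ * (r : B) = (E.σ₂₁ r : B) * E.y₁ + (E.σ₂₂ r : B) * E.y₂ := by
  rw [E.R2₂, hδ₂]; simp

include hδ₁ hδ₂ hτ₁ hτ₂ hτ₀ in
lemma expand1 (r : A) : E.y₂ * (E.y₁ * (r : B)) =
    ((E.σ₂₁ (E.σ₁₁ r) + E.p₁₁ • E.σ₂₂ (E.σ₁₁ r) : A) : B) * (E.y₁ ^ 2 * E.y₂ ^ 0)
    + ((E.p₁₂ • E.σ₂₂ (E.σ₁₁ r) + E.σ₂₁ (E.σ₁₂ r) : A) : B) * (E.y₁ ^ 1 * E.y₂ ^ 1)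
    + ((E.σ₂₂ (E.σ₁₂ r) : A) : B) * (E.y₁ ^ 0 * E.y₂ ^ 2) := by
  rw [E.hR2₁ hδ₁ r]
  simp only [mul_add, ← mul_assoc]
  rw [E.hR2₂ hδ₂, E.hR2₂ hδ₂]
  simp only [add_mul, mul_assoc, E.hR1 hτ₁ hτ₂ hτ₀]
  simp only [pow_succ, pow_zero, one_mul, mul_one, Subalgebra.coe_add, SetLike.val_smul,
    mul_add, mul_smul_comm, smul_mul_assoc, add_mul, mul_assoc]
  module

include hδ₁ hδ₂ hτ₁ hτ₂ hτ₀ in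
lemma expand2 (r : A) : E.y₂ * (E.y₁ * (r : B)) =
    ((E.p₁₂ • E.σ₁₁ (E.σ₂₁ r) + E.p₁₁ • E.σ₁₁ (E.σ₁₁ r)
        + E.p₁₁ • (E.p₁₂ • E.σ₁₂ (E.σ₂₁ r) + E.p₁₁ • E.σ₁₂ (E.σ₁₁ r)) : A) : B)
        * (E.y₁ ^ 2 * E.y₂ ^ 0)
    + ((E.p₁₂ • E.σ₁₁ (E.σ₂₂ r) + E.p₁₁ • E.σ₁₁ (E.σ₁₂ r)
        + E.p₁₂ • (E.p₁₂ • E.σ₁₂ (E.σ₂₁ r) + E.p₁₁ • E.σ₁₂ (E.σ₁₁ r)) : A) : B)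
        * (E.y₁ ^ 1 * E.y₂ ^ 1)
    + ((E.p₁₂ • E.σ₁₂ (E.σ₂₂ r) + E.p₁₁ • E.σ₁₂ (E.σ₁₂ r) : A) : B)
        * (E.y₁ ^ 0 * E.y₂ ^ 2) := by
  rw [← mul_assoc, E.hR1 hτ₁ hτ₂ hτ₀, add_mul, smul_mul_assoc, smul_mul_assoc,
    mul_assoc, mul_assoc, E.hR2₂ hδ₂ r, E.hR2₁ hδ₁ r]
  simp only [mul_add, ← mul_assoc]
  rw [E.hR2₁ hδ₁, E.hR2₁ hδ₁, E.hR2₁ hδ₁, E.hR2₁ hδ₁]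
  simp only [add_mul, mul_assoc, E.hR1 hτ₁ hτ₂ hτ₀]
  simp only [pow_succ, pow_zero, one_mul, mul_one, Subalgebra.coe_add, SetLike.val_smul,
    mul_add, mul_smul_comm, smul_mul_assoc, add_mul, mul_assoc, smul_add, smul_smul]
  module

end trimmed
end RightDoubleExtension

/-- In a trimmed right double extension with `p₁₂ ≠ 0`, the map
`g : c ↦ (c(p₁₁y₁ − y₂), c·p₁₂y₁)` intertwines the twisted right `A`-actions: for all
`r ∈ A`, `(p₁₁y₁ − y₂)σ₁₁(r) + p₁₂y₁σ₂₁(r) = det σ(r)·(p₁₁y₁ − y₂)` and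
`(p₁₁y₁ − y₂)σ₁₂(r) + p₁₂y₁σ₂₂(r) = det σ(r)·p₁₂y₁`. -/
theorem trimmed_g_bimodule_identities
    {k : Type*} [Field k] {B : Type*} [Ring B] [Algebra k B]
    {A : Subalgebra k B} (E : RightDoubleExtension k A)
    (hδ₁ : E.δ₁ = 0) (hδ₂ : E.δ₂ = 0)
    (hτ₁ : E.τ₁ = 0) (hτ₂ : E.τ₂ = 0) (hτ₀ : E.τ₀ = 0)
    (hp : E.p₁₂ ≠ 0) :
    ∀ r : A,
      (E.p₁₁ • E.y₁ - E.y₂) * (E.σ₁₁ r : B) + E.p₁₂ • (E.y₁ * (E.σ₂₁ r : B)) =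
        (E.detσ r : B) * (E.p₁₁ • E.y₁ - E.y₂) ∧
      (E.p₁₁ • E.y₁ - E.y₂) * (E.σ₁₂ r : B) + E.p₁₂ • (E.y₁ * (E.σ₂₂ r : B)) =
        (E.detσ r : B) * (E.p₁₂ • E.y₁) := by
  intro r
  obtain ⟨ha, hb, hc⟩ := E.coeff_unique
    ((E.expand1 hδ₁ hδ₂ hτ₁ hτ₂ hτ₀ r).symm.trans (E.expand2 hδ₁ hδ₂ hτ₁ hτ₂ hτ₀ r))
  have ha' := congrArg (fun x : A => (x : B) * E.y₁) ha
  have hb' := congrArg (fun x : A => (x : B) * E.y₁) hb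
  have hc' := congrArg (fun x : A => (x : B) * E.y₂) hc
  simp only [Subalgebra.coe_add, SetLike.val_smul, add_mul, smul_mul_assoc] at ha' hb' hc'
  constructor
  · rw [sub_mul, smul_mul_assoc, E.hR2₁ hδ₁, E.hR2₂ hδ₂, E.hR2₁ hδ₁]
    show _ = (E.detσ r : B) * _
    simp only [RightDoubleExtension.detσ, Subalgebra.coe_add, Subalgebra.coe_sub,
      Subalgebra.coe_neg, SetLike.val_smul, mul_sub, sub_mul, add_mul, neg_mul,
      smul_mul_assoc, mul_smul_comm, smul_add, smul_sub, smul_smul]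
    linear_combination (norm := module) -ha'
  · rw [sub_mul, smul_mul_assoc, E.hR2₁ hδ₁, E.hR2₂ hδ₂, E.hR2₁ hδ₁]
    show _ = (E.detσ r : B) * _
    simp only [RightDoubleExtension.detσ, Subalgebra.coe_add, Subalgebra.coe_sub,
      Subalgebra.coe_neg, SetLike.val_smul, mul_sub, sub_mul, add_mul, neg_mul,
      smul_mul_assoc, mul_smul_comm, smul_add, smul_sub, smul_smul]
    linear_combination (norm := module) -hb' - hc'
end

section
/- Let B be a trimmed right double extension of A with data (P, σ) and p₁₂ ≠ 0. Define the left B-module maps g : B → B ⊕ B, g(c) = (c(p₁₁y₁ − y₂), c·p₁₂·y₁), and f : B ⊕ B → B, f(a, b) = ay₁ + by₂. Then: (i) g is injective; (ii) the range of g equals the kernel of f; (iii) the range of f equals the left ideal By₁ + By₂; and (iv) B = A ⊕ (By₁ + By₂) as k-vector spaces, i.e. A ∩ (By₁ + By₂) = 0 and A + By₁ + By₂ = B. In other words, 0 → B → B ⊕ B → B → B/(By₁ + By₂) → 0 is an exact sequence of left B-modules, and B/(By₁ + By₂) ≅ A. -/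
namespace RDE

variable {k : Type*} [Field k] {B : Type*} [Ring B] [Algebra k B]
  {A : Subalgebra k B} (E : RightDoubleExtension k A)

/-- The monomial function. -/
def G0 : ℕ × ℕ → A → B := fun n a => (a : B) * (E.y₁ ^ n.1 * E.y₂ ^ n.2)

lemma G0_zero (n : ℕ × ℕ) : G0 E n 0 = 0 := by simp [G0]

lemma G0_add (n : ℕ × ℕ) (a b : A) : G0 E n (a + b) = G0 E n a + G0 E n b := by
  simp [G0, add_mul]

lemma G0_smul (n : ℕ × ℕ) (p : k) (a : A) : G0 E n (p • a) = p • G0 E n a := by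
  simp [G0, smul_mul_assoc]

lemma G0_neg (n : ℕ × ℕ) (a : A) : G0 E n (-a) = - G0 E n a := by
  simp [G0, neg_mul]

/-- The coefficient finsupp of an element. -/
noncomputable def coeff (x : B) : ℕ × ℕ →₀ A := (E.basis x).choose

lemma sum_coeff (x : B) : x = (coeff E x).sum (G0 E) := (E.basis x).choose_spec.1

lemma coeff_unique {x : B} {f : ℕ × ℕ →₀ A} (h : x = f.sum (G0 E)) : coeff E x = f :=
  ((E.basis x).choose_spec.2 f h).symm

lemma coeff_zero : coeff E (0 : B) = 0 :=
  coeff_unique E (by simp [Finsupp.sum_zero_index])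

lemma eq_zero_of_coeff {x : B} (h : coeff E x = 0) : x = 0 := by
  have := sum_coeff E x
  rw [h] at this
  simpa [Finsupp.sum_zero_index] using this

lemma coeff_neg (x : B) : coeff E (-x) = - coeff E x := by
  refine coeff_unique E ?_
  rw [Finsupp.sum_neg_index (fun n => G0_zero E n)]
  simp only [G0_neg]
  rw [Finsupp.sum_neg, ← sum_coeff]


/-- `Rp P x`: `x` admits a representation supported on indices satisfying `P`. -/
def Rp (P : ℕ × ℕ → Prop) (x : B) : Prop :=
  ∃ f : ℕ × ℕ →₀ A, (∀ n, f n ≠ 0 → P n) ∧ x = f.sum (G0 E)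

lemma rp_coeff {P : ℕ × ℕ → Prop} {x : B} (h : Rp E P x) :
    ∀ n, coeff E x n ≠ 0 → P n := by
  obtain ⟨f, hf, hx⟩ := h
  rw [coeff_unique E hx]
  exact hf

lemma rp_zero (P : ℕ × ℕ → Prop) : Rp E P 0 :=
  ⟨0, by simp, by simp [Finsupp.sum_zero_index]⟩

lemma rp_mono {P Q : ℕ × ℕ → Prop} (h : ∀ n, P n → Q n) {x : B} (hx : Rp E P x) :
    Rp E Q x := by
  obtain ⟨f, hf, hfx⟩ := hx
  exact ⟨f, fun n hn => h n (hf n hn), hfx⟩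

lemma rp_add {P : ℕ × ℕ → Prop} {x y : B} (hx : Rp E P x) (hy : Rp E P y) :
    Rp E P (x + y) := by
  obtain ⟨f, hf, hfx⟩ := hx
  obtain ⟨g, hg, hgy⟩ := hy
  refine ⟨f + g, ?_, ?_⟩
  · intro n hn
    rw [Finsupp.add_apply] at hn
    by_cases h1 : f n = 0
    · exact hg n (by simpa [h1] using hn)
    · exact hf n h1
  · rw [hfx, hgy, Finsupp.sum_add_index' (G0_zero E) (G0_add E)]

lemma rp_neg {P : ℕ × ℕ → Prop} {x : B} (hx : Rp E P x) : Rp E P (-x) := by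
  obtain ⟨f, hf, hfx⟩ := hx
  refine ⟨-f, fun n hn => hf n (by simpa using hn), ?_⟩
  rw [Finsupp.sum_neg_index (G0_zero E)]
  simp only [G0_neg]
  rw [Finsupp.sum_neg, hfx]

lemma rp_smul {P : ℕ × ℕ → Prop} (p : k) {x : B} (hx : Rp E P x) : Rp E P (p • x) := by
  obtain ⟨f, hf, hfx⟩ := hx
  refine ⟨p • f, ?_, ?_⟩
  · intro n hn
    apply hf n
    intro h0
    rw [Finsupp.smul_apply, h0, smul_zero] at hn
    exact hn rfl
  · rw [Finsupp.sum_smul_index' (G0_zero E)]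
    simp only [G0_smul]
    rw [← Finsupp.smul_sum, hfx]

lemma rp_amul {P : ℕ × ℕ → Prop} (a : A) {x : B} (hx : Rp E P x) : Rp E P ((a : B) * x) := by
  obtain ⟨f, hf, hfx⟩ := hx
  refine ⟨f.mapRange (a * ·) (mul_zero a), ?_, ?_⟩
  · intro n hn
    apply hf n
    intro h0
    rw [Finsupp.mapRange_apply, h0, mul_zero] at hn
    exact hn rfl
  · rw [Finsupp.sum_mapRange_index (G0_zero E), hfx, Finsupp.mul_sum]
    refine Finset.sum_congr rfl fun n _ => ?_
    simp [G0, mul_assoc]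

lemma rp_single {P : ℕ × ℕ → Prop} {n : ℕ × ℕ} (hn : P n) :
    Rp E P (E.y₁ ^ n.1 * E.y₂ ^ n.2) := by
  refine ⟨Finsupp.single n 1, ?_, ?_⟩
  · intro m hm
    rcases eq_or_ne m n with rfl | hne
    · exact hn
    · simp [Finsupp.single_apply, hne] at hm
  · rw [Finsupp.sum_single_index (G0_zero E n)]
    simp [G0]

lemma rp_finsum {P : ℕ × ℕ → Prop} {ι : Type*} (s : Finset ι) (F : ι → B)
    (h : ∀ i ∈ s, Rp E P (F i)) : Rp E P (∑ i ∈ s, F i) := by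
  classical
  induction s using Finset.induction_on with
  | empty => simpa using rp_zero E P
  | insert a s hni ih =>
    rw [Finset.sum_insert hni]
    exact rp_add E (h a (Finset.mem_insert_self a s))
      (ih fun i hi => h i (Finset.mem_insert_of_mem hi))

lemma rp_muly₂ {P Q : ℕ × ℕ → Prop} {x : B} (hx : Rp E P x)
    (hPQ : ∀ n, P n → Q (n.1, n.2 + 1)) : Rp E Q (x * E.y₂) := by
  obtain ⟨f, hf, hfx⟩ := hx
  refine ⟨f.embDomain ⟨fun n => (n.1, n.2 + 1), fun a b h => by
    simpa [Prod.ext_iff] using h⟩, ?_, ?_⟩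
  · intro n hn
    have hsupp : n ∈ (f.embDomain _).support := Finsupp.mem_support_iff.2 hn
    rw [Finsupp.support_embDomain, Finset.mem_map] at hsupp
    obtain ⟨m, hm, hmn⟩ := hsupp
    have : f m ≠ 0 := Finsupp.mem_support_iff.1 hm
    rw [← hmn]
    exact hPQ m (hf m this)
  · rw [Finsupp.sum_embDomain, hfx, Finsupp.sum_mul]
    refine Finset.sum_congr rfl fun n _ => ?_
    change _ = G0 E (n.1, n.2 + 1) _
    simp [G0, mul_assoc, pow_succ]

lemma rp_bind {P Q : ℕ × ℕ → Prop} {x z : B} (hx : Rp E P x)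
    (h : ∀ n, P n → Rp E Q (E.y₁ ^ n.1 * E.y₂ ^ n.2 * z)) : Rp E Q (x * z) := by
  obtain ⟨f, hf, hfx⟩ := hx
  rw [hfx, Finsupp.sum_mul]
  refine rp_finsum E _ _ fun n hn => ?_
  show Rp E Q (G0 E n (f n) * z)
  have h1 : G0 E n (f n) * z = (f n : B) * (E.y₁ ^ n.1 * E.y₂ ^ n.2 * z) := by
    simp [G0, mul_assoc]
  rw [h1]
  exact rp_amul E _ (h n (hf n (Finsupp.mem_support_iff.1 hn)))


section Trimmed

variable (hτ₁ : E.τ₁ = 0) (hτ₂ : E.τ₂ = 0) (hτ₀ : E.τ₀ = 0)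

include hτ₁ hτ₂ hτ₀ in
lemma R1t : E.y₂ * E.y₁ = E.p₁₂ • (E.y₁ * E.y₂) + E.p₁₁ • (E.y₁ * E.y₁) := by
  rw [E.R1, hτ₁, hτ₂, hτ₀]
  simp

include hτ₁ hτ₂ hτ₀ in
lemma bracket : (E.p₁₁ • E.y₁ - E.y₂) * E.y₁ + E.p₁₂ • (E.y₁ * E.y₂) = 0 := by
  rw [sub_mul, smul_mul_assoc, R1t E hτ₁ hτ₂ hτ₀]
  abel

include hτ₁ hτ₂ hτ₀ in
lemma qs : ∀ b t, t ≤ b → ∀ a, ∃ r, Rp E (fun n => 1 ≤ n.1 ∧ n.2 < t) r ∧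
    E.y₁ ^ a * E.y₂ ^ t * E.y₁ = E.p₁₂ ^ t • (E.y₁ ^ (a + 1) * E.y₂ ^ t) + r := by
  intro b
  induction b with
  | zero =>
    intro t ht a
    interval_cases t
    refine ⟨0, rp_zero E _, ?_⟩
    simp [pow_succ]
  | succ b ih =>
    intro t ht a
    rcases le_or_gt t b with ht' | ht'
    · exact ih t ht' a
    have htb : t = b + 1 := le_antisymm ht ht'
    subst htb
    obtain ⟨r, hr, hrw⟩ := ih b le_rfl a
    set W := E.y₁ ^ a * E.y₂ ^ b * E.y₁ with hWdef
    have hW : Rp E (fun n => 1 ≤ n.1 ∧ n.2 ≤ b) W := by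
      rw [hrw]
      refine rp_add E (rp_smul E _ (rp_single E (n := (a+1, b)) ⟨Nat.succ_le_succ (Nat.zero_le a), le_rfl⟩))
        (rp_mono E (fun n hn => ⟨hn.1, Nat.le_of_lt hn.2⟩) hr)
    have hWy₁ : Rp E (fun n => 1 ≤ n.1 ∧ n.2 ≤ b) (W * E.y₁) := by
      refine rp_bind E hW fun n hn => ?_
      obtain ⟨r', hr', hrw'⟩ := ih n.2 hn.2 n.1
      rw [hrw']
      refine rp_add E (rp_smul E _ (rp_single E (n := (n.1+1, n.2)) ⟨Nat.succ_le_succ (Nat.zero_le _), hn.2⟩))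
        (rp_mono E (fun m hm => ⟨hm.1, le_trans (Nat.le_of_lt hm.2) hn.2⟩) hr')
    refine ⟨E.p₁₂ • (r * E.y₂) + E.p₁₁ • (W * E.y₁), ?_, ?_⟩
    · refine rp_add E (rp_smul E _ ?_) (rp_smul E _ ?_)
      · exact rp_muly₂ E hr fun n hn => ⟨hn.1, Nat.succ_lt_succ hn.2⟩
      · exact rp_mono E (fun n hn => ⟨hn.1, Nat.lt_succ_of_le hn.2⟩) hWy₁
    · calc E.y₁ ^ a * E.y₂ ^ (b+1) * E.y₁
          = (E.y₁ ^ a * E.y₂ ^ b) * (E.y₂ * E.y₁) := by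
            simp [pow_succ, mul_assoc]
        _ = E.p₁₂ • (W * E.y₂) + E.p₁₁ • (W * E.y₁) := by
            rw [R1t E hτ₁ hτ₂ hτ₀, mul_add, mul_smul_comm, mul_smul_comm, hWdef]
            simp [mul_assoc]
        _ = E.p₁₂ • (E.p₁₂ ^ b • (E.y₁ ^ (a+1) * E.y₂ ^ (b+1)) + r * E.y₂) + E.p₁₁ • (W * E.y₁) := by
            rw [hrw, add_mul, smul_mul_assoc]
            simp [pow_succ, mul_assoc]
        _ = E.p₁₂ ^ (b+1) • (E.y₁ ^ (a+1) * E.y₂ ^ (b+1)) + (E.p₁₂ • (r * E.y₂) + E.p₁₁ • (W * E.y₁)) := by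
            rw [smul_add, smul_smul, ← pow_succ']
            abel

include hτ₁ hτ₂ hτ₀ in
lemma rp_monoy₁ (a t : ℕ) :
    Rp E (fun n => 1 ≤ n.1 ∧ n.2 ≤ t) (E.y₁ ^ a * E.y₂ ^ t * E.y₁) := by
  obtain ⟨r, hr, hrw⟩ := qs E hτ₁ hτ₂ hτ₀ t t le_rfl a
  rw [hrw]
  exact rp_add E (rp_smul E _ (rp_single E (n := (a+1, t)) ⟨Nat.succ_le_succ (Nat.zero_le _), le_rfl⟩))
    (rp_mono E (fun n hn => ⟨hn.1, Nat.le_of_lt hn.2⟩) hr)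

include hτ₁ hτ₂ hτ₀ in
lemma rp_muly₁_le {D : ℕ} {x : B} (hx : Rp E (fun n => n.2 ≤ D) x) :
    Rp E (fun n => n.2 ≤ D) (x * E.y₁) := by
  refine rp_bind E hx fun n hn => ?_
  exact rp_mono E (fun m hm => le_trans hm.2 hn) (rp_monoy₁ E hτ₁ hτ₂ hτ₀ n.1 n.2)

include hτ₁ hτ₂ hτ₀ in
lemma rp_muly₁_lt {D : ℕ} {x : B} (hx : Rp E (fun n => n.2 < D) x) :
    Rp E (fun n => n.2 < D) (x * E.y₁) := by
  refine rp_bind E hx fun n hn => ?_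
  exact rp_mono E (fun m hm => lt_of_le_of_lt hm.2 hn) (rp_monoy₁ E hτ₁ hτ₂ hτ₀ n.1 n.2)

/-- The embedding `(i, j) ↦ (i, j + 1)`. -/
def e2 : ℕ × ℕ ↪ ℕ × ℕ := ⟨fun n => (n.1, n.2 + 1), by
  intro a b h
  simpa [Prod.ext_iff] using h⟩

lemma coeff_muly₂ (x : B) : coeff E (x * E.y₂) = (coeff E x).embDomain e2 := by
  refine coeff_unique E ?_
  rw [Finsupp.sum_embDomain]
  conv_lhs => rw [sum_coeff E x]
  rw [Finsupp.sum_mul]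
  refine Finset.sum_congr rfl fun n _ => ?_
  change _ = G0 E (n.1, n.2 + 1) _
  simp [G0, e2, mul_assoc, pow_succ]

lemma y₂reg {x : B} (h : x * E.y₂ = 0) : x = 0 := by
  apply eq_zero_of_coeff E
  have h1 := coeff_muly₂ E x
  rw [h, coeff_zero] at h1
  exact Finsupp.embDomain_eq_zero.1 h1.symm

include hτ₁ hτ₂ hτ₀ in
lemma y₁reg (hp : E.p₁₂ ≠ 0) {x : B} (hx : x ≠ 0) : x * E.y₁ ≠ 0 := by
  classical
  set F := coeff E x with hFdef
  have hF : F ≠ 0 := fun h => hx (eq_zero_of_coeff E h)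
  have hsupp : F.support.Nonempty := Finsupp.support_nonempty_iff.2 hF
  set D := F.support.sup (fun n => n.2) with hDdef
  obtain ⟨n₀, hn₀, hD⟩ := Finset.exists_mem_eq_sup F.support hsupp (fun n => n.2)
  have hle : ∀ n ∈ F.support, n.2 ≤ D := fun n hn => Finset.le_sup hn
  -- choice of remainders
  have H : ∀ n : ℕ × ℕ, ∃ r, Rp E (fun m => 1 ≤ m.1 ∧ m.2 < n.2) r ∧
      E.y₁ ^ n.1 * E.y₂ ^ n.2 * E.y₁ = E.p₁₂ ^ n.2 • (E.y₁ ^ (n.1 + 1) * E.y₂ ^ n.2) + r :=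
    fun n => qs E hτ₁ hτ₂ hτ₀ n.2 n.2 le_rfl n.1
  choose r hrp hrw using H
  have hxy : x * E.y₁ =
      (∑ n ∈ F.support.filter (fun n => n.2 = D),
        E.p₁₂ ^ D • ((F n : B) * (E.y₁ ^ (n.1 + 1) * E.y₂ ^ D)))
      + ((∑ n ∈ F.support.filter (fun n => ¬ n.2 = D),
          E.p₁₂ ^ n.2 • ((F n : B) * (E.y₁ ^ (n.1 + 1) * E.y₂ ^ n.2)))
        + ∑ n ∈ F.support, (F n : B) * r n) := by
    conv_lhs => rw [sum_coeff E x, Finsupp.sum_mul]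
    rw [← hFdef]
    have : ∀ n ∈ F.support, G0 E n (F n) * E.y₁ =
        E.p₁₂ ^ n.2 • ((F n : B) * (E.y₁ ^ (n.1 + 1) * E.y₂ ^ n.2)) + (F n : B) * r n := by
      intro n _
      show (F n : B) * (E.y₁ ^ n.1 * E.y₂ ^ n.2) * E.y₁ = _
      rw [mul_assoc, hrw n, mul_add, mul_smul_comm]
    have e1 := (Finset.sum_filter_add_sum_filter_not F.support (fun n => n.2 = D)
      (fun n => E.p₁₂ ^ n.2 • ((F n : B) * (E.y₁ ^ (n.1 + 1) * E.y₂ ^ n.2)))).symm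
    have e2 : ∑ n ∈ F.support.filter (fun n => n.2 = D),
        E.p₁₂ ^ n.2 • ((F n : B) * (E.y₁ ^ (n.1 + 1) * E.y₂ ^ n.2))
        = ∑ n ∈ F.support.filter (fun n => n.2 = D),
        E.p₁₂ ^ D • ((F n : B) * (E.y₁ ^ (n.1 + 1) * E.y₂ ^ D)) := by
      refine Finset.sum_congr rfl fun n hn => ?_
      rw [(Finset.mem_filter.1 hn).2]
    rw [Finsupp.sum, Finset.sum_congr rfl this, Finset.sum_add_distrib, e1, e2, add_assoc]
  -- the remainder part is Rp (· < D)
  have hR : Rp E (fun m => m.2 < D)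
      ((∑ n ∈ F.support.filter (fun n => ¬ n.2 = D),
          E.p₁₂ ^ n.2 • ((F n : B) * (E.y₁ ^ (n.1 + 1) * E.y₂ ^ n.2)))
        + ∑ n ∈ F.support, (F n : B) * r n) := by
    refine rp_add E ?_ ?_
    · refine rp_finsum E _ _ fun n hn => ?_
      rw [Finset.mem_filter] at hn
      have h2 : n.2 < D := lt_of_le_of_ne (hle n hn.1) hn.2
      exact rp_smul E _ (rp_amul E _ (rp_single E (n := (n.1+1, n.2)) h2))
    · refine rp_finsum E _ _ fun n hn => ?_
      exact rp_amul E _ (rp_mono E (fun m hm => lt_of_lt_of_le hm.2 (hle n hn)) (hrp n))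
  obtain ⟨h, hh, hhw⟩ := hR
  -- the top part as an explicit finsupp
  set eup : ℕ × ℕ ↪ ℕ × ℕ := ⟨fun n => (n.1 + 1, n.2), by
    intro a b hab
    simpa [Prod.ext_iff] using hab⟩ with heup
  set G : ℕ × ℕ →₀ A := Finsupp.embDomain eup (E.p₁₂ ^ D • F.filter (fun n => n.2 = D)) with hGdef
  have hT : (∑ n ∈ F.support.filter (fun n => n.2 = D),
        E.p₁₂ ^ D • ((F n : B) * (E.y₁ ^ (n.1 + 1) * E.y₂ ^ D))) = G.sum (G0 E) := by
    rw [hGdef, Finsupp.sum_embDomain, Finsupp.sum_smul_index' (fun i => G0_zero E _)]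
    rw [Finsupp.sum, Finsupp.support_filter]
    refine Finset.sum_congr rfl fun n hn => ?_
    rw [Finset.mem_filter] at hn
    have hfa : Finsupp.filter (fun m => m.2 = D) F n = F n :=
      Finsupp.filter_apply_pos (fun m => m.2 = D) F hn.2
    rw [hfa, G0_smul]
    show E.p₁₂ ^ D • ((F n : B) * (E.y₁ ^ (n.1 + 1) * E.y₂ ^ D)) = E.p₁₂ ^ D • G0 E (eup n) (F n)
    have : G0 E (eup n) (F n) = (F n : B) * (E.y₁ ^ (n.1 + 1) * E.y₂ ^ n.2) := rfl
    rw [this, hn.2]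
  have hcoeff : coeff E (x * E.y₁) = G + h := by
    refine coeff_unique E ?_
    rw [Finsupp.sum_add_index' (G0_zero E) (G0_add E), hxy, hT, hhw]
  have hne : coeff E (x * E.y₁) (n₀.1 + 1, D) ≠ 0 := by
    rw [hcoeff, Finsupp.add_apply]
    have h0 : h (n₀.1 + 1, D) = 0 := by
      by_contra hc
      exact absurd (hh _ hc) (lt_irrefl D)
    rw [h0, add_zero]
    have heq : ((n₀.1 + 1 : ℕ), D) = eup n₀ := by
      show ((n₀.1 + 1 : ℕ), D) = (n₀.1 + 1, n₀.2)
      exact congrArg (Prod.mk (n₀.1 + 1)) hD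
    rw [heq, Finsupp.embDomain_apply_self, Finsupp.smul_apply]
    have hfa : Finsupp.filter (fun m => m.2 = D) F n₀ = F n₀ :=
      Finsupp.filter_apply_pos (fun m => m.2 = D) F hD.symm
    rw [hfa]
    exact smul_ne_zero (pow_ne_zero D hp) (Finsupp.mem_support_iff.1 hn₀)
  intro hzero
  rw [hzero, coeff_zero] at hne
  exact hne rfl

lemma rp_true (x : B) : Rp E (fun _ => True) x :=
  ⟨coeff E x, fun _ _ => trivial, sum_coeff E x⟩

include hτ₁ hτ₂ hτ₀ in
lemma key (hp : E.p₁₂ ≠ 0) : ∀ N (u v : B), (∀ n, coeff E u n ≠ 0 → n.2 < N) →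
    u * E.y₁ + v * E.y₂ = 0 →
    ∃ c : B, c * (E.p₁₁ • E.y₁ - E.y₂) = u ∧ E.p₁₂ • (c * E.y₁) = v := by
  intro N
  induction N with
  | zero =>
    intro u v hu heq
    have hu0 : coeff E u = 0 := by
      ext n
      by_contra hc
      exact absurd (hu n (by exact_mod_cast hc)) (Nat.not_lt_zero _)
    have hu' : u = 0 := eq_zero_of_coeff E hu0
    have hv : v = 0 := by
      apply y₂reg E
      rw [hu', zero_mul, zero_add] at heq
      exact heq
    exact ⟨0, by simp [hu'], by simp [hv]⟩
  | succ N ihN =>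
    intro u v hu heq
    obtain _ | M := N
    · -- N = 0 : u is supported in y₂-degree 0
      have hu0 : Rp E (fun n => n.2 ≤ 0) u :=
        ⟨coeff E u, fun n hn => Nat.lt_succ_iff.1 (hu n hn), sum_coeff E u⟩
      have huy : Rp E (fun n => n.2 ≤ 0) (u * E.y₁) := rp_muly₁_le E hτ₁ hτ₂ hτ₀ hu0
      have hneg : u * E.y₁ = -(v * E.y₂) := eq_neg_of_add_eq_zero_left heq
      have hcoe : coeff E (u * E.y₁) = -((coeff E v).embDomain e2) := by
        rw [hneg, coeff_neg, coeff_muly₂]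
      have hzero : coeff E (u * E.y₁) = 0 := by
        ext n
        rcases Nat.eq_zero_or_pos n.2 with h0 | h0
        · have hnot : n ∉ Set.range e2 := by
            rintro ⟨m, hm⟩
            have : n.2 = m.2 + 1 := by rw [← hm]; rfl
            omega
          have := Finsupp.embDomain_notin_range e2 (coeff E v) n hnot
          rw [hcoe, Finsupp.neg_apply, this, neg_zero]
          rfl
        · by_contra hc
          have : (coeff E (u * E.y₁)) n ≠ 0 := by exact_mod_cast hc
          have := rp_coeff E huy n this
          omega
      have huy0 : u * E.y₁ = 0 := eq_zero_of_coeff E hzero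
      have hu' : u = 0 := by
        by_contra hc
        exact y₁reg E hτ₁ hτ₂ hτ₀ hp hc huy0
      have hv : v = 0 := by
        apply y₂reg E
        rw [hu', zero_mul, zero_add] at heq
        exact heq
      exact ⟨0, by simp [hu'], by simp [hv]⟩
    · -- N = M + 1
      set F := coeff E u with hFdef
      set c₁ : B := -((F.filter (fun n => n.2 = M + 1)).sum
        (fun n a => (a : B) * (E.y₁ ^ n.1 * E.y₂ ^ M))) with hc₁def
      have hc₁rp : Rp E (fun n => n.2 ≤ M) c₁ := by
        refine rp_neg E (rp_finsum E _ _ fun n _ => ?_)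
        exact rp_amul E _ (rp_single E (n := (n.1, M)) le_rfl)
      have h2 : c₁ * E.y₂ = -((F.filter (fun n => n.2 = M + 1)).sum (G0 E)) := by
        rw [hc₁def, neg_mul, neg_inj, Finsupp.sum_mul]
        refine Finset.sum_congr rfl fun n hn => ?_
        rw [Finsupp.support_filter, Finset.mem_filter] at hn
        show ((((F.filter (fun n => n.2 = M + 1)) n : A) : B) * (E.y₁ ^ n.1 * E.y₂ ^ M)) * E.y₂
          = G0 E n ((F.filter (fun n => n.2 = M + 1)) n)
        rw [G0, hn.2]
        simp [mul_assoc, pow_succ]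
      have hsplit : u = (F.filter (fun n => n.2 = M + 1)).sum (G0 E)
          + (F.filter (fun n => ¬ n.2 = M + 1)).sum (G0 E) := by
        conv_lhs => rw [sum_coeff E u, ← hFdef,
          ← Finsupp.filter_pos_add_filter_neg F (fun n => n.2 = M + 1)]
        rw [Finsupp.sum_add_index' (G0_zero E) (G0_add E)]
      have hu'rp : Rp E (fun n => n.2 < M + 1) (u + c₁ * E.y₂) := by
        refine ⟨F.filter (fun n => ¬ n.2 = M + 1), ?_, ?_⟩
        · intro n hn
          by_cases hmem : ¬ n.2 = M + 1
          · have hFn : F n ≠ 0 := by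
              rwa [Finsupp.filter_apply_pos (fun n => ¬ n.2 = M + 1) F hmem] at hn
            have := hu n hFn
            omega
          · rw [Finsupp.filter_apply_neg (fun n => ¬ n.2 = M + 1) F hmem] at hn
            exact absurd rfl hn
        · rw [h2, hsplit]
          abel
      set u' : B := u - c₁ * (E.p₁₁ • E.y₁ - E.y₂) with hu'def
      set v' : B := v - E.p₁₂ • (c₁ * E.y₁) with hv'def
      have hru' : Rp E (fun n => n.2 < M + 1) u' := by
        have e : u' = (u + c₁ * E.y₂) + (-(E.p₁₁ • (c₁ * E.y₁))) := by
          rw [hu'def, mul_sub, mul_smul_comm]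
          abel
        rw [e]
        refine rp_add E hu'rp (rp_neg E (rp_smul E _ ?_))
        exact rp_mono E (fun n hn => Nat.lt_succ_of_le hn)
          (rp_muly₁_le E hτ₁ hτ₂ hτ₀ hc₁rp)
      have heq' : u' * E.y₁ + v' * E.y₂ = 0 := by
        have expand : u' * E.y₁ + v' * E.y₂ = (u * E.y₁ + v * E.y₂)
            - c₁ * ((E.p₁₁ • E.y₁ - E.y₂) * E.y₁ + E.p₁₂ • (E.y₁ * E.y₂)) := by
          rw [hu'def, hv'def]
          simp only [sub_mul, smul_mul_assoc, mul_add, mul_sub, mul_smul_comm, mul_assoc]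
          abel
        rw [expand, heq, bracket E hτ₁ hτ₂ hτ₀, mul_zero, zero_sub, neg_zero]
      obtain ⟨c', hc'1, hc'2⟩ := ihN u' v' (rp_coeff E hru') heq'
      refine ⟨c₁ + c', ?_, ?_⟩
      · rw [add_mul, hc'1, hu'def]
        abel
      · rw [add_mul, smul_add, hc'2, hv'def]
        abel

end Trimmed

end RDE

theorem RDE_main
    {k : Type*} [Field k] {B : Type*} [Ring B] [Algebra k B]
    {A : Subalgebra k B} (E : RightDoubleExtension k A)
    (hδ₁ : E.δ₁ = 0) (hδ₂ : E.δ₂ = 0)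
    (hτ₁ : E.τ₁ = 0) (hτ₂ : E.τ₂ = 0) (hτ₀ : E.τ₀ = 0)
    (hp : E.p₁₂ ≠ 0) :
    Function.Injective
      (fun c : B => (c * (E.p₁₁ • E.y₁ - E.y₂), E.p₁₂ • (c * E.y₁))) ∧
    (∀ x : B × B, x.1 * E.y₁ + x.2 * E.y₂ = 0 ↔
      ∃ c : B, (c * (E.p₁₁ • E.y₁ - E.y₂), E.p₁₂ • (c * E.y₁)) = x) ∧
    (∀ b : B, (∃ x : B × B, x.1 * E.y₁ + x.2 * E.y₂ = b) ↔
      b ∈ Submodule.span B ({E.y₁, E.y₂} : Set B)) ∧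
    ((∀ a : A, (a : B) ∈ Submodule.span B ({E.y₁, E.y₂} : Set B) → a = 0) ∧
     (∀ b : B, ∃ a : A, b - (a : B) ∈ Submodule.span B ({E.y₁, E.y₂} : Set B))) := by
  classical
  refine ⟨?_, ?_, ?_, ?_, ?_⟩
  · -- (i) injectivity
    intro c c' h
    rw [Prod.ext_iff] at h
    have h2 : c * E.y₁ = c' * E.y₁ := smul_right_injective B hp h.2
    by_contra hne
    have hsub : (c - c') * E.y₁ = 0 := by rw [sub_mul, h2, sub_self]
    exact RDE.y₁reg E hτ₁ hτ₂ hτ₀ hp (sub_ne_zero.2 hne) hsub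
  · -- (ii) range g = ker f
    intro x
    constructor
    · intro hker
      obtain ⟨c, h1, h2⟩ := RDE.key E hτ₁ hτ₂ hτ₀ hp
        ((RDE.coeff E x.1).support.sup (fun n => n.2) + 1) x.1 x.2
        (fun n hn => Nat.lt_succ_of_le (Finset.le_sup (Finsupp.mem_support_iff.2 hn)))
        hker
      exact ⟨c, Prod.ext_iff.2 ⟨h1, h2⟩⟩
    · rintro ⟨c, rfl⟩
      have hb := RDE.bracket E hτ₁ hτ₂ hτ₀
      calc c * (E.p₁₁ • E.y₁ - E.y₂) * E.y₁ + (E.p₁₂ • (c * E.y₁)) * E.y₂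
          = c * ((E.p₁₁ • E.y₁ - E.y₂) * E.y₁ + E.p₁₂ • (E.y₁ * E.y₂)) := by
            simp only [mul_add, mul_smul_comm, smul_mul_assoc, mul_assoc]
        _ = 0 := by rw [hb, mul_zero]
  · -- (iii) range f
    intro b
    constructor
    · rintro ⟨x, rfl⟩
      have h1 : x.1 * E.y₁ ∈ Submodule.span B ({E.y₁, E.y₂} : Set B) := by
        rw [← smul_eq_mul]
        exact Submodule.smul_mem _ _ (Submodule.subset_span (by simp))
      have h2 : x.2 * E.y₂ ∈ Submodule.span B ({E.y₁, E.y₂} : Set B) := by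
        rw [← smul_eq_mul]
        exact Submodule.smul_mem _ _ (Submodule.subset_span (by simp))
      exact Submodule.add_mem _ h1 h2
    · intro hb
      obtain ⟨a, b', hab⟩ := Submodule.mem_span_pair.1 hb
      exact ⟨(a, b'), by simpa [smul_eq_mul] using hab⟩
  · -- (iv) part 1
    intro a ha
    obtain ⟨c, d, hcd⟩ := Submodule.mem_span_pair.1 ha
    rw [smul_eq_mul, smul_eq_mul] at hcd
    have hrp : RDE.Rp E (fun n => n ≠ ((0 : ℕ), (0 : ℕ))) ((a : B)) := by
      rw [← hcd]
      refine RDE.rp_add E ?_ ?_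
      · refine RDE.rp_bind E (RDE.rp_true E c) fun n _ => ?_
        refine RDE.rp_mono E (fun m hm => ?_) (RDE.rp_monoy₁ E hτ₁ hτ₂ hτ₀ n.1 n.2)
        intro hm0
        rw [hm0] at hm
        exact absurd hm.1 (by simp)
      · refine RDE.rp_muly₂ E (RDE.rp_true E d) fun n _ => ?_
        simp
    have hsingle : RDE.coeff E ((a : B)) = Finsupp.single ((0 : ℕ), (0 : ℕ)) a := by
      refine RDE.coeff_unique E ?_
      rw [Finsupp.sum_single_index (RDE.G0_zero E _)]
      simp [RDE.G0]
    by_contra hne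
    have hcne : RDE.coeff E ((a : B)) ((0 : ℕ), (0 : ℕ)) ≠ 0 := by
      rw [hsingle, Finsupp.single_eq_same]
      exact hne
    exact (RDE.rp_coeff E hrp _ hcne) rfl
  · -- (iv) part 2
    intro b
    set f := RDE.coeff E b with hfdef
    refine ⟨f ((0 : ℕ), (0 : ℕ)), ?_⟩
    have hsplit : b = (f ((0 : ℕ), (0 : ℕ)) : B) + (f.erase ((0 : ℕ), (0 : ℕ))).sum (RDE.G0 E) := by
      conv_lhs => rw [RDE.sum_coeff E b, ← hfdef,
        ← Finsupp.single_add_erase ((0 : ℕ), (0 : ℕ)) f]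
      rw [Finsupp.sum_add_index' (RDE.G0_zero E) (RDE.G0_add E),
        Finsupp.sum_single_index (RDE.G0_zero E _)]
      simp [RDE.G0]
    have : b - (f ((0 : ℕ), (0 : ℕ)) : B) = (f.erase ((0 : ℕ), (0 : ℕ))).sum (RDE.G0 E) := by
      rw [hsplit]; abel
    rw [this]
    refine Submodule.sum_mem _ fun n hn => ?_
    rw [Finsupp.support_erase, Finset.mem_erase] at hn
    obtain ⟨n1, n2⟩ := n
    rcases n2 with _ | n2'
    · rcases n1 with _ | n1'
      · exact absurd rfl hn.1
      · have : RDE.G0 E (n1' + 1, 0) ((f.erase ((0 : ℕ), (0 : ℕ))) (n1' + 1, 0))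
            = (((f.erase ((0 : ℕ), (0 : ℕ))) (n1' + 1, 0) : A) : B) * E.y₁ ^ n1' * E.y₁ := by
          simp [RDE.G0, pow_succ, mul_assoc]
        rw [this, ← smul_eq_mul]
        exact Submodule.smul_mem _ _ (Submodule.subset_span (by simp))
    · have : RDE.G0 E (n1, n2' + 1) ((f.erase ((0 : ℕ), (0 : ℕ))) (n1, n2' + 1))
          = (((f.erase ((0 : ℕ), (0 : ℕ))) (n1, n2' + 1) : A) : B) * (E.y₁ ^ n1 * E.y₂ ^ n2') * E.y₂ := by
        simp [RDE.G0, pow_succ, mul_assoc]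
      rw [this, ← smul_eq_mul]
      exact Submodule.smul_mem _ _ (Submodule.subset_span (by simp))

/-- For a trimmed right double extension with `p₁₂ ≠ 0`, the sequence
`0 → B --g--> B ⊕ B --f--> B → B/(By₁+By₂) → 0`, with
`g(c) = (c(p₁₁y₁ − y₂), c·p₁₂y₁)` and `f(a,b) = ay₁ + by₂`, is exact, and
`B/(By₁ + By₂) ≅ A`, i.e. `B = A ⊕ (By₁ + By₂)`. -/
theorem trimmed_exact_sequence
    {k : Type*} [Field k] {B : Type*} [Ring B] [Algebra k B]
    {A : Subalgebra k B} (E : RightDoubleExtension k A)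
    (hδ₁ : E.δ₁ = 0) (hδ₂ : E.δ₂ = 0)
    (hτ₁ : E.τ₁ = 0) (hτ₂ : E.τ₂ = 0) (hτ₀ : E.τ₀ = 0)
    (hp : E.p₁₂ ≠ 0) :
    -- (i) g is injective
    Function.Injective
      (fun c : B => (c * (E.p₁₁ • E.y₁ - E.y₂), E.p₁₂ • (c * E.y₁))) ∧
    -- (ii) range g = ker f
    (∀ x : B × B, x.1 * E.y₁ + x.2 * E.y₂ = 0 ↔
      ∃ c : B, (c * (E.p₁₁ • E.y₁ - E.y₂), E.p₁₂ • (c * E.y₁)) = x) ∧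
    -- (iii) range f = By₁ + By₂
    (∀ b : B, (∃ x : B × B, x.1 * E.y₁ + x.2 * E.y₂ = b) ↔
      b ∈ Submodule.span B ({E.y₁, E.y₂} : Set B)) ∧
    -- (iv) B = A ⊕ (By₁ + By₂)
    ((∀ a : A, (a : B) ∈ Submodule.span B ({E.y₁, E.y₂} : Set B) → a = 0) ∧
     (∀ b : B, ∃ a : A, b - (a : B) ∈ Submodule.span B ({E.y₁, E.y₂} : Set B))) := RDE_main E hδ₁ hδ₂ hτ₁ hτ₂ hτ₀ hp
end

section
/- (a) There is a k-algebra automorphism f of B(h) determined by f(x₁) = x₂, f(x₂) = −x₁, f(y₁) = y₂, f(y₂) = −y₁. (b) There is a k-algebra isomorphism g : B(h) → B(h)ᵒᵖ (the opposite algebra) determined by g(x₁) = y₁, g(x₂) = y₂, g(y₁) = x₁, g(y₂) = x₂; equivalently, B(h) has an anti-automorphism exchanging x₁ ↔ y₁ and x₂ ↔ y₂. -/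
/-- The six defining relations of the algebra `B(h)`, on the free algebra on four
generators `x₁ = X 0`, `x₂ = X 1`, `y₁ = X 2`, `y₂ = X 3`. -/
def bhRel (k : Type*) [Field k] (h : k) :
    FreeAlgebra k (Fin 4) → FreeAlgebra k (Fin 4) → Prop := fun a b =>
  (a = FreeAlgebra.ι k 1 * FreeAlgebra.ι k 0 ∧
    b = -(FreeAlgebra.ι k 0 * FreeAlgebra.ι k 1)) ∨
  (a = FreeAlgebra.ι k 3 * FreeAlgebra.ι k 2 ∧
    b = -(FreeAlgebra.ι k 2 * FreeAlgebra.ι k 3)) ∨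
  (a = FreeAlgebra.ι k 2 * FreeAlgebra.ι k 0 ∧
    b = h • (FreeAlgebra.ι k 0 * FreeAlgebra.ι k 2 + FreeAlgebra.ι k 1 * FreeAlgebra.ι k 2
      + FreeAlgebra.ι k 0 * FreeAlgebra.ι k 3)) ∨
  (a = FreeAlgebra.ι k 2 * FreeAlgebra.ι k 1 ∧
    b = h • (FreeAlgebra.ι k 0 * FreeAlgebra.ι k 3)) ∨
  (a = FreeAlgebra.ι k 3 * FreeAlgebra.ι k 0 ∧
    b = h • (FreeAlgebra.ι k 1 * FreeAlgebra.ι k 2)) ∨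
  (a = FreeAlgebra.ι k 3 * FreeAlgebra.ι k 1 ∧
    b = h • (-(FreeAlgebra.ι k 1 * FreeAlgebra.ι k 2) - FreeAlgebra.ι k 0 * FreeAlgebra.ι k 3
      + FreeAlgebra.ι k 1 * FreeAlgebra.ι k 3))

/-- The algebra `B(h)`: the quotient of `k⟨x₁,x₂,y₁,y₂⟩` by the two-sided ideal
generated by the six relations. -/
abbrev Bh (k : Type*) [Field k] (h : k) := RingQuot (bhRel k h)

/-- The generator `x₁` of `B(h)`. -/
def bX₁ (k : Type*) [Field k] (h : k) : Bh k h :=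
  RingQuot.mkAlgHom k (bhRel k h) (FreeAlgebra.ι k 0)

/-- The generator `x₂` of `B(h)`. -/
def bX₂ (k : Type*) [Field k] (h : k) : Bh k h :=
  RingQuot.mkAlgHom k (bhRel k h) (FreeAlgebra.ι k 1)

/-- The generator `y₁` of `B(h)`. -/
def bY₁ (k : Type*) [Field k] (h : k) : Bh k h :=
  RingQuot.mkAlgHom k (bhRel k h) (FreeAlgebra.ι k 2)

/-- The generator `y₂` of `B(h)`. -/
def bY₂ (k : Type*) [Field k] (h : k) : Bh k h :=
  RingQuot.mkAlgHom k (bhRel k h) (FreeAlgebra.ι k 3)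

section Aux
variable (k : Type*) [Field k] (h : k)

lemma bh_rel1 : bX₂ k h * bX₁ k h = -(bX₁ k h * bX₂ k h) := by
  simpa only [map_mul, map_neg, bX₁, bX₂, bY₁, bY₂] using
    RingQuot.mkAlgHom_rel k (s := bhRel k h) (Or.inl ⟨rfl, rfl⟩)

lemma bh_rel2 : bY₂ k h * bY₁ k h = -(bY₁ k h * bY₂ k h) := by
  simpa only [map_mul, map_neg, bX₁, bX₂, bY₁, bY₂] using
    RingQuot.mkAlgHom_rel k (s := bhRel k h) (Or.inr (Or.inl ⟨rfl, rfl⟩))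

lemma bh_rel3 : bY₁ k h * bX₁ k h
    = h • (bX₁ k h * bY₁ k h + bX₂ k h * bY₁ k h + bX₁ k h * bY₂ k h) := by
  simpa only [map_mul, map_add, map_smul, bX₁, bX₂, bY₁, bY₂] using
    RingQuot.mkAlgHom_rel k (s := bhRel k h) (Or.inr (Or.inr (Or.inl ⟨rfl, rfl⟩)))

lemma bh_rel4 : bY₁ k h * bX₂ k h = h • (bX₁ k h * bY₂ k h) := by
  simpa only [map_mul, map_smul, bX₁, bX₂, bY₁, bY₂] using
    RingQuot.mkAlgHom_rel k (s := bhRel k h) (Or.inr (Or.inr (Or.inr (Or.inl ⟨rfl, rfl⟩))))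

lemma bh_rel5 : bY₂ k h * bX₁ k h = h • (bX₂ k h * bY₁ k h) := by
  simpa only [map_mul, map_smul, bX₁, bX₂, bY₁, bY₂] using
    RingQuot.mkAlgHom_rel k
      (s := bhRel k h) (Or.inr (Or.inr (Or.inr (Or.inr (Or.inl ⟨rfl, rfl⟩)))))

lemma bh_rel6 : bY₂ k h * bX₂ k h
    = h • (-(bX₂ k h * bY₁ k h) - bX₁ k h * bY₂ k h + bX₂ k h * bY₂ k h) := by
  simpa only [map_mul, map_add, map_sub, map_neg, map_smul, bX₁, bX₂, bY₁, bY₂] using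
    RingQuot.mkAlgHom_rel k
      (s := bhRel k h) (Or.inr (Or.inr (Or.inr (Or.inr (Or.inr ⟨rfl, rfl⟩)))))

lemma mk_X₁ : RingQuot.mkAlgHom k (bhRel k h) (FreeAlgebra.ι k 0) = bX₁ k h := rfl
lemma mk_X₂ : RingQuot.mkAlgHom k (bhRel k h) (FreeAlgebra.ι k 1) = bX₂ k h := rfl
lemma mk_Y₁ : RingQuot.mkAlgHom k (bhRel k h) (FreeAlgebra.ι k 2) = bY₁ k h := rfl
lemma mk_Y₂ : RingQuot.mkAlgHom k (bhRel k h) (FreeAlgebra.ι k 3) = bY₂ k h := rfl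

/-- images of generators under the automorphism -/
def bGenF : Fin 4 → Bh k h
  | 0 => bX₂ k h
  | 1 => -bX₁ k h
  | 2 => bY₂ k h
  | 3 => -bY₁ k h

@[simp] lemma bGenF_0 : bGenF k h 0 = bX₂ k h := rfl
@[simp] lemma bGenF_1 : bGenF k h 1 = -bX₁ k h := rfl
@[simp] lemma bGenF_2 : bGenF k h 2 = bY₂ k h := rfl
@[simp] lemma bGenF_3 : bGenF k h 3 = -bY₁ k h := rfl

lemma bneg_mul (a b : Bh k h) : -a * b = -(a * b) := neg_mul a b
lemma bmul_neg (a b : Bh k h) : a * -b = -(a * b) := mul_neg a b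

lemma bhRelF : ∀ ⦃a b⦄, bhRel k h a b →
    (FreeAlgebra.lift k (bGenF k h)) a = (FreeAlgebra.lift k (bGenF k h)) b := by
  rintro a b (⟨rfl, rfl⟩ | ⟨rfl, rfl⟩ | ⟨rfl, rfl⟩ | ⟨rfl, rfl⟩ | ⟨rfl, rfl⟩ | ⟨rfl, rfl⟩) <;>
    simp only [map_mul, map_add, map_sub, map_neg, map_smul, FreeAlgebra.lift_ι_apply,
      bGenF_0, bGenF_1, bGenF_2, bGenF_3, bneg_mul k h, bmul_neg k h, neg_neg]
  · rw [bh_rel1]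
  · rw [bh_rel2]
  · rw [bh_rel6]; module
  · rw [bh_rel5]; module
  · rw [bh_rel4]; module
  · rw [bh_rel3]; module

/-- the endomorphism `f` -/
def bF : Bh k h →ₐ[k] Bh k h :=
  RingQuot.liftAlgHom k ⟨FreeAlgebra.lift k (bGenF k h), bhRelF k h⟩

@[simp] lemma bF_X₁ : bF k h (bX₁ k h) = bX₂ k h := by
  simp [bF, bX₁, RingQuot.liftAlgHom_mkAlgHom_apply, bGenF]
@[simp] lemma bF_X₂ : bF k h (bX₂ k h) = -bX₁ k h := by
  simp [bF, bX₂, RingQuot.liftAlgHom_mkAlgHom_apply, bGenF]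
@[simp] lemma bF_Y₁ : bF k h (bY₁ k h) = bY₂ k h := by
  simp [bF, bY₁, RingQuot.liftAlgHom_mkAlgHom_apply, bGenF]
@[simp] lemma bF_Y₂ : bF k h (bY₂ k h) = -bY₁ k h := by
  simp [bF, bY₂, RingQuot.liftAlgHom_mkAlgHom_apply, bGenF]

lemma bF_four : (bF k h).comp ((bF k h).comp ((bF k h).comp (bF k h)))
    = AlgHom.id k (Bh k h) := by
  apply RingQuot.ringQuot_ext'
  apply FreeAlgebra.hom_ext
  funext i
  fin_cases i <;>
    simp [mk_X₁, mk_X₂, mk_Y₁, mk_Y₂]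

/-- images of generators under the anti-automorphism -/
def bGenG : Fin 4 → (Bh k h)ᵐᵒᵖ
  | 0 => MulOpposite.op (bY₁ k h)
  | 1 => MulOpposite.op (bY₂ k h)
  | 2 => MulOpposite.op (bX₁ k h)
  | 3 => MulOpposite.op (bX₂ k h)

@[simp] lemma bGenG_0 : bGenG k h 0 = MulOpposite.op (bY₁ k h) := rfl
@[simp] lemma bGenG_1 : bGenG k h 1 = MulOpposite.op (bY₂ k h) := rfl
@[simp] lemma bGenG_2 : bGenG k h 2 = MulOpposite.op (bX₁ k h) := rfl
@[simp] lemma bGenG_3 : bGenG k h 3 = MulOpposite.op (bX₂ k h) := rfl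

lemma bhRelG : ∀ ⦃a b⦄, bhRel k h a b →
    (FreeAlgebra.lift k (bGenG k h)) a = (FreeAlgebra.lift k (bGenG k h)) b := by
  rintro a b (⟨rfl, rfl⟩ | ⟨rfl, rfl⟩ | ⟨rfl, rfl⟩ | ⟨rfl, rfl⟩ | ⟨rfl, rfl⟩ | ⟨rfl, rfl⟩) <;>
    simp only [map_mul, map_add, map_sub, map_neg, map_smul, FreeAlgebra.lift_ι_apply,
      bGenG_0, bGenG_1, bGenG_2, bGenG_3, ← MulOpposite.op_mul, ← MulOpposite.op_add,
      ← MulOpposite.op_sub, ← MulOpposite.op_neg, ← MulOpposite.op_smul, MulOpposite.op_inj]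
  · rw [bh_rel2, neg_neg]
  · rw [bh_rel1, neg_neg]
  · rw [bh_rel3]; module
  · exact bh_rel5 k h
  · exact bh_rel4 k h
  · rw [bh_rel6]; module

/-- the anti-automorphism `g`, as an algebra hom into the opposite algebra -/
def bG : Bh k h →ₐ[k] (Bh k h)ᵐᵒᵖ :=
  RingQuot.liftAlgHom k ⟨FreeAlgebra.lift k (bGenG k h), bhRelG k h⟩

@[simp] lemma bG_X₁ : bG k h (bX₁ k h) = MulOpposite.op (bY₁ k h) := by
  simp [bG, bX₁, RingQuot.liftAlgHom_mkAlgHom_apply]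
@[simp] lemma bG_X₂ : bG k h (bX₂ k h) = MulOpposite.op (bY₂ k h) := by
  simp [bG, bX₂, RingQuot.liftAlgHom_mkAlgHom_apply]
@[simp] lemma bG_Y₁ : bG k h (bY₁ k h) = MulOpposite.op (bX₁ k h) := by
  simp [bG, bY₁, RingQuot.liftAlgHom_mkAlgHom_apply]
@[simp] lemma bG_Y₂ : bG k h (bY₂ k h) = MulOpposite.op (bX₂ k h) := by
  simp [bG, bY₂, RingQuot.liftAlgHom_mkAlgHom_apply]

/-- the inverse of the anti-automorphism -/
def bGinv : (Bh k h)ᵐᵒᵖ →ₐ[k] Bh k h := AlgHom.opComm (bG k h)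

@[simp] lemma bGinv_op (a : Bh k h) :
    bGinv k h (MulOpposite.op a) = MulOpposite.unop (bG k h a) := rfl

lemma bGinv_comp_bG : (bGinv k h).comp (bG k h) = AlgHom.id k (Bh k h) := by
  apply RingQuot.ringQuot_ext'
  apply FreeAlgebra.hom_ext
  funext i
  fin_cases i <;>
    simp [mk_X₁, mk_X₂, mk_Y₁, mk_Y₂]

lemma bG_comp_bGinv : (bG k h).comp (bGinv k h) = AlgHom.id k (Bh k h)ᵐᵒᵖ := by
  apply AlgHom.op.symm.injective
  apply RingQuot.ringQuot_ext'
  apply FreeAlgebra.hom_ext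
  funext i
  fin_cases i <;>
    simp [mk_X₁, mk_X₂, mk_Y₁, mk_Y₂, AlgHom.op]

end Aux

/-- `B(h)` has an automorphism `f` with `f(x₁) = x₂`, `f(x₂) = −x₁`, `f(y₁) = y₂`,
`f(y₂) = −y₁`, and an anti-automorphism (an isomorphism onto the opposite algebra)
`g` with `g(x₁) = y₁`, `g(x₂) = y₂`, `g(y₁) = x₁`, `g(y₂) = x₂`. -/
theorem Bh_automorphism_antiautomorphism (k : Type*) [Field k] (h : k) (hh : h ≠ 0) :
    (∃ f : Bh k h ≃ₐ[k] Bh k h,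
      f (bX₁ k h) = bX₂ k h ∧ f (bX₂ k h) = -bX₁ k h ∧
      f (bY₁ k h) = bY₂ k h ∧ f (bY₂ k h) = -bY₁ k h) ∧
    (∃ g : Bh k h ≃ₐ[k] (Bh k h)ᵐᵒᵖ,
      g (bX₁ k h) = MulOpposite.op (bY₁ k h) ∧ g (bX₂ k h) = MulOpposite.op (bY₂ k h) ∧
      g (bY₁ k h) = MulOpposite.op (bX₁ k h) ∧ g (bY₂ k h) = MulOpposite.op (bX₂ k h)) := by
  constructor
  · refine ⟨AlgEquiv.ofAlgHom (bF k h) ((bF k h).comp ((bF k h).comp (bF k h)))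
      ?_ ?_, by simp [AlgEquiv.ofAlgHom], by simp [AlgEquiv.ofAlgHom],
      by simp [AlgEquiv.ofAlgHom], by simp [AlgEquiv.ofAlgHom]⟩
    · exact bF_four k h
    · exact bF_four k h
  · exact ⟨AlgEquiv.ofAlgHom (bG k h) (bGinv k h) (bG_comp_bGinv k h) (bGinv_comp_bG k h),
      by exact bG_X₁ k h, by exact bG_X₂ k h,
      by exact bG_Y₁ k h, by exact bG_Y₂ k h⟩
end

section
/- There exists a unique k-algebra homomorphism σ : A → M₂(A) with σ(x₁) = h·[[x₁+x₂, x₁],[x₂, 0]] and σ(x₂) = h·[[0, x₁],[−x₂, −x₁+x₂]]; equivalently, σ(x₁)·σ(x₂) + σ(x₂)·σ(x₁) = 0 in M₂(A). Moreover, for each pair (i, j) ∈ {1,2}², the entry map σᵢⱼ : A → A, r ↦ σ(r)ᵢⱼ, is not a k-algebra homomorphism: indeed σᵢⱼ(x₁²) ≠ (σᵢⱼ(x₁))². -/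
/-- The defining relation of `A = k⟨x₁,x₂⟩/(x₁x₂ + x₂x₁)`. -/
def aRel (k : Type*) [Field k] :
    FreeAlgebra k (Fin 2) → FreeAlgebra k (Fin 2) → Prop := fun a b =>
  a = FreeAlgebra.ι k 0 * FreeAlgebra.ι k 1 + FreeAlgebra.ι k 1 * FreeAlgebra.ι k 0 ∧ b = 0

/-- The algebra `A = k⟨x₁,x₂⟩/(x₁x₂ + x₂x₁)`. -/
abbrev Aq (k : Type*) [Field k] := RingQuot (aRel k)

/-- The generator `x₁` of `A`. -/
def aX₁ (k : Type*) [Field k] : Aq k :=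
  RingQuot.mkAlgHom k (aRel k) (FreeAlgebra.ι k 0)

/-- The generator `x₂` of `A`. -/
def aX₂ (k : Type*) [Field k] : Aq k :=
  RingQuot.mkAlgHom k (aRel k) (FreeAlgebra.ι k 1)

lemma arel (k : Type*) [Field k] : aX₁ k * aX₂ k + aX₂ k * aX₁ k = 0 := by
  have h := RingQuot.mkAlgHom_rel k (s := aRel k) (⟨rfl, rfl⟩ :
    aRel k (FreeAlgebra.ι k 0 * FreeAlgebra.ι k 1 + FreeAlgebra.ι k 1 * FreeAlgebra.ι k 0) 0)
  simpa [aX₁, aX₂, map_mul, map_add] using h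

lemma arel' (k : Type*) [Field k] : aX₂ k * aX₁ k = -(aX₁ k * aX₂ k) :=
  eq_neg_of_add_eq_zero_left (by simpa [add_comm] using arel k)

lemma rq_mul_neg (k : Type*) [Field k] (a b : Aq k) : a * -b = -(a * b) := mul_neg a b
lemma rq_neg_mul (k : Type*) [Field k] (a b : Aq k) : -a * b = -(a * b) := neg_mul a b

lemma keyM (k : Type*) [Field k] :
    (!![aX₁ k + aX₂ k, aX₁ k; aX₂ k, 0] : Matrix (Fin 2) (Fin 2) (Aq k)) *
        !![0, aX₁ k; -aX₂ k, -aX₁ k + aX₂ k] +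
      !![0, aX₁ k; -aX₂ k, -aX₁ k + aX₂ k] *
        (!![aX₁ k + aX₂ k, aX₁ k; aX₂ k, 0] : Matrix (Fin 2) (Fin 2) (Aq k)) = 0 := by
  ext i j
  fin_cases i <;> fin_cases j <;>
    simp [Matrix.mul_apply, Fin.sum_univ_two, mul_add, add_mul, mul_neg, neg_mul,
      arel' k] <;>
    simp only [rq_mul_neg, rq_neg_mul, arel' k, neg_neg] <;> abel

lemma keyM' (k : Type*) [Field k] (h : k) :
    ((h • !![aX₁ k + aX₂ k, aX₁ k; aX₂ k, 0] : Matrix (Fin 2) (Fin 2) (Aq k)) *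
        (h • !![0, aX₁ k; -aX₂ k, -aX₁ k + aX₂ k]) +
      (h • !![0, aX₁ k; -aX₂ k, -aX₁ k + aX₂ k] : Matrix (Fin 2) (Fin 2) (Aq k)) *
        (h • !![aX₁ k + aX₂ k, aX₁ k; aX₂ k, 0]) = 0) := by
  rw [smul_mul_assoc, smul_mul_assoc, mul_smul_comm, mul_smul_comm, smul_smul, smul_smul,
    ← smul_add, keyM, smul_zero]

noncomputable def sig (k : Type*) [Field k] (h : k) : Aq k →ₐ[k] Matrix (Fin 2) (Fin 2) (Aq k) :=
  RingQuot.liftAlgHom k ⟨FreeAlgebra.lift k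
      ![h • !![aX₁ k + aX₂ k, aX₁ k; aX₂ k, 0],
        h • !![0, aX₁ k; -aX₂ k, -aX₁ k + aX₂ k]], by
    rintro a b ⟨rfl, rfl⟩
    simp only [map_add, map_mul, map_zero, FreeAlgebra.lift_ι_apply]
    simpa using keyM' k h⟩

lemma sig_x1 (k : Type*) [Field k] (h : k) :
    sig k h (aX₁ k) = h • !![aX₁ k + aX₂ k, aX₁ k; aX₂ k, 0] := by
  simp [sig, aX₁, RingQuot.liftAlgHom_mkAlgHom_apply, FreeAlgebra.lift_ι_apply]

lemma sig_x2 (k : Type*) [Field k] (h : k) :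
    sig k h (aX₂ k) = h • !![0, aX₁ k; -aX₂ k, -aX₁ k + aX₂ k] := by
  simp [sig, aX₂, RingQuot.liftAlgHom_mkAlgHom_apply, FreeAlgebra.lift_ι_apply]

lemma sig_unique (k : Type*) [Field k] (h : k)
    (τ : Aq k →ₐ[k] Matrix (Fin 2) (Fin 2) (Aq k))
    (h1 : τ (aX₁ k) = h • !![aX₁ k + aX₂ k, aX₁ k; aX₂ k, 0])
    (h2 : τ (aX₂ k) = h • !![0, aX₁ k; -aX₂ k, -aX₁ k + aX₂ k]) :
    τ = sig k h := by
  have key : τ.comp (RingQuot.mkAlgHom k (aRel k)) =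
      (sig k h).comp (RingQuot.mkAlgHom k (aRel k)) := by
    apply FreeAlgebra.hom_ext
    funext i
    fin_cases i
    · show τ (aX₁ k) = sig k h (aX₁ k)
      rw [h1, sig_x1]
    · show τ (aX₂ k) = sig k h (aX₂ k)
      rw [h2, sig_x2]
  apply AlgHom.ext
  intro x
  obtain ⟨y, rfl⟩ := RingQuot.mkAlgHom_surjective k (aRel k) x
  exact DFunLike.congr_fun key y

noncomputable def phi (k : Type*) [Field k] : Aq k →ₐ[k] Matrix (Fin 2) (Fin 2) k :=
  RingQuot.liftAlgHom k ⟨FreeAlgebra.lift k ![!![1,0;0,-1], !![0,1;1,0]], by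
    rintro a b ⟨rfl, rfl⟩
    simp only [map_add, map_mul, map_zero, FreeAlgebra.lift_ι_apply]
    ext i j
    fin_cases i <;> fin_cases j <;>
      simp [Matrix.mul_apply, Fin.sum_univ_two]⟩

lemma phi_x1 (k : Type*) [Field k] : phi k (aX₁ k) = !![1,0;0,-1] := by
  simp [phi, aX₁, RingQuot.liftAlgHom_mkAlgHom_apply, FreeAlgebra.lift_ι_apply]

lemma phi_x2 (k : Type*) [Field k] : phi k (aX₂ k) = !![0,1;1,0] := by
  simp [phi, aX₂, RingQuot.liftAlgHom_mkAlgHom_apply, FreeAlgebra.lift_ι_apply]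

set_option synthInstance.maxHeartbeats 400000 in
set_option maxHeartbeats 1000000 in
lemma sig_entries_not_hom (k : Type*) [Field k] (h : k) (hh : h ≠ 0)
    (σ : Aq k →ₐ[k] Matrix (Fin 2) (Fin 2) (Aq k))
    (h1 : σ (aX₁ k) = h • !![aX₁ k + aX₂ k, aX₁ k; aX₂ k, 0]) :
    ∀ i j : Fin 2, σ (aX₁ k * aX₁ k) i j ≠ σ (aX₁ k) i j * σ (aX₁ k) i j := by
  intro i j
  rw [map_mul, h1]
  fin_cases i <;> fin_cases j <;> intro H <;>
    (have H2 := congrArg (phi k) H;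
     simp [phi_x1 k, phi_x2 k, Matrix.mul_fin_two, smul_mul_smul_comm, Matrix.mul_apply,
       Fin.sum_univ_two, funext_iff, Fin.forall_fin_two, hh, mul_eq_zero] at H2) <;>
    exact hh (mul_self_eq_zero.mp (by simpa using congrFun (congrFun H2 1) 0))

/-- There is a unique `k`-algebra homomorphism `σ : A → M₂(A)` with
`σ(x₁) = h·[[x₁+x₂, x₁],[x₂, 0]]` and `σ(x₂) = h·[[0, x₁],[−x₂, −x₁+x₂]]`
(equivalently, the two prescribed matrices anticommute), and none of its four entry
maps `σᵢⱼ` is a `k`-algebra homomorphism: `σᵢⱼ(x₁²) ≠ (σᵢⱼ(x₁))²`. -/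
theorem sigma_matrix_algHom (k : Type*) [Field k] (h : k) (hh : h ≠ 0) :
    ((h • !![aX₁ k + aX₂ k, aX₁ k; aX₂ k, 0] : Matrix (Fin 2) (Fin 2) (Aq k)) *
        (h • !![0, aX₁ k; -aX₂ k, -aX₁ k + aX₂ k]) +
      (h • !![0, aX₁ k; -aX₂ k, -aX₁ k + aX₂ k] : Matrix (Fin 2) (Fin 2) (Aq k)) *
        (h • !![aX₁ k + aX₂ k, aX₁ k; aX₂ k, 0]) = 0) ∧
    (∃! σ : Aq k →ₐ[k] Matrix (Fin 2) (Fin 2) (Aq k),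
      σ (aX₁ k) = h • !![aX₁ k + aX₂ k, aX₁ k; aX₂ k, 0] ∧
      σ (aX₂ k) = h • !![0, aX₁ k; -aX₂ k, -aX₁ k + aX₂ k]) ∧
    (∀ σ : Aq k →ₐ[k] Matrix (Fin 2) (Fin 2) (Aq k),
      (σ (aX₁ k) = h • !![aX₁ k + aX₂ k, aX₁ k; aX₂ k, 0] ∧
       σ (aX₂ k) = h • !![0, aX₁ k; -aX₂ k, -aX₁ k + aX₂ k]) →
      ∀ i j : Fin 2, σ (aX₁ k * aX₁ k) i j ≠ σ (aX₁ k) i j * σ (aX₁ k) i j) := by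
  refine ⟨keyM' k h,
    ⟨sig k h, ⟨sig_x1 k h, sig_x2 k h⟩, fun τ ht => sig_unique k h τ ht.1 ht.2⟩,
    fun σ ht => sig_entries_not_hom k h hh σ ht.1⟩
end

section
/- Let D : A → A be the unique k-algebra endomorphism with D(x₁) = h²·x₂ and D(x₂) = −h²·x₁ (it exists since (h²x₂)(−h²x₁) + (−h²x₁)(h²x₂) = 0). Then, as k-linear maps A → A: σ₂₂∘σ₁₁ + σ₁₂∘σ₂₁ = D and σ₁₁∘σ₂₂ + σ₂₁∘σ₁₂ = D; in particular the determinant det σ = σ₂₂∘σ₁₁ + σ₁₂∘σ₂₁ (corresponding to P = (−1, 0)) is a bijective k-algebra endomorphism of A. Moreover σ₂₂∘σ₁₁ + σ₂₁∘σ₁₂ ≠ D and σ₁₁∘σ₂₂ + σ₁₂∘σ₂₁ ≠ D as k-linear maps A → A. -/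
section AqAux

variable (k : Type*) [Field k]

lemma aq_rel : aX₁ k * aX₂ k + aX₂ k * aX₁ k = 0 := by
  have := RingQuot.mkAlgHom_rel k (s := aRel k)
    (x := FreeAlgebra.ι k 0 * FreeAlgebra.ι k 1 + FreeAlgebra.ι k 1 * FreeAlgebra.ι k 0)
    (y := 0) ⟨rfl, rfl⟩
  simpa [aX₁, aX₂, map_add, map_mul] using this

lemma aq_exists_hom {B : Type*} [Ring B] [Algebra k B] (c d : B) (hcd : c * d + d * c = 0) :
    ∃ F : Aq k →ₐ[k] B, F (aX₁ k) = c ∧ F (aX₂ k) = d := by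
  refine ⟨RingQuot.liftAlgHom k ⟨FreeAlgebra.lift k (fun i => if i = 0 then c else d), ?_⟩, ?_, ?_⟩
  · rintro a b ⟨rfl, rfl⟩
    simp [hcd]
  · simp [aX₁, RingQuot.liftAlgHom_mkAlgHom_apply]
  · simp [aX₂, RingQuot.liftAlgHom_mkAlgHom_apply]

lemma aq_hom_ext {B : Type*} [Ring B] [Algebra k B] {F G : Aq k →ₐ[k] B}
    (h1 : F (aX₁ k) = G (aX₁ k)) (h2 : F (aX₂ k) = G (aX₂ k)) : F = G := by
  refine RingQuot.ringQuot_ext' k F G ?_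
  refine FreeAlgebra.hom_ext (funext fun i => ?_)
  fin_cases i
  · exact h1
  · exact h2

lemma aq_induction (p : Aq k → Prop) (halg : ∀ c : k, p (algebraMap k (Aq k) c))
    (h1 : p (aX₁ k)) (h2 : p (aX₂ k))
    (hadd : ∀ a b, p a → p b → p (a + b)) (hmul : ∀ a b, p a → p b → p (a * b)) :
    ∀ a, p a := by
  intro a
  obtain ⟨x, rfl⟩ := RingQuot.mkAlgHom_surjective k (aRel k) a
  induction x using FreeAlgebra.induction with
  | grade0 c => rw [AlgHom.commutes]; exact halg c
  | grade1 i =>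
    fin_cases i
    · exact h1
    · exact h2
  | mul a b ha hb => rw [map_mul]; exact hmul _ _ ha hb
  | add a b ha hb => rw [map_add]; exact hadd _ _ ha hb

lemma aq_aux {A : Type*} [Ring A] {p1 p2 p3 p4 q1 q2 q3 q4 S2 S3 da db : A} (S1 S4 : A)
    (e1 : p1 + q1 = 0) (e2 : p2 + q2 = da) (e3 : p3 + q3 = da) (e4 : p4 + q4 = 0)
    (eb : S2 + S3 = db) :
    (p1 * S1 + p2 * S2 + (p3 * S3 + p4 * S4)) +
      (q1 * S1 + q2 * S2 + (q3 * S3 + q4 * S4)) = da * db := by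
  have h1 : (p1 + q1) * S1 + ((p2 + q2) * S2 + ((p3 + q3) * S3 + (p4 + q4) * S4))
      = da * (S2 + S3) := by rw [e1, e2, e3, e4]; noncomm_ring
  calc (p1 * S1 + p2 * S2 + (p3 * S3 + p4 * S4)) +
      (q1 * S1 + q2 * S2 + (q3 * S3 + q4 * S4))
      = (p1 + q1) * S1 + ((p2 + q2) * S2 + ((p3 + q3) * S3 + (p4 + q4) * S4)) := by noncomm_ring
    _ = da * (S2 + S3) := h1
    _ = da * db := by rw [eb]

lemma aq_aux0 {A : Type*} [Ring A] {p1 p2 p3 p4 q1 q2 q3 q4 S2 S3 da : A} (S1 S4 : A)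
    (e1 : p1 + q1 = 0) (e2 : p2 + q2 = da) (e3 : p3 + q3 = da) (e4 : p4 + q4 = 0)
    (eb : S2 + S3 = 0) :
    (p1 * S1 + p2 * S2 + (p3 * S3 + p4 * S4)) +
      (q1 * S1 + q2 * S2 + (q3 * S3 + q4 * S4)) = 0 := by
  rw [aq_aux S1 S4 e1 e2 e3 e4 eb, mul_zero]

lemma aq_key (h : k) (σ : Aq k →ₐ[k] Matrix (Fin 2) (Fin 2) (Aq k))
    (hσ1 : σ (aX₁ k) = h • !![aX₁ k + aX₂ k, aX₁ k; aX₂ k, 0])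
    (hσ2 : σ (aX₂ k) = h • !![0, aX₁ k; -aX₂ k, -aX₁ k + aX₂ k])
    (D : Aq k →ₐ[k] Aq k)
    (hD1 : D (aX₁ k) = (h ^ 2) • aX₂ k) (hD2 : D (aX₂ k) = -((h ^ 2) • aX₁ k)) :
    ∀ r : Aq k,
      (σ (σ r 0 0) 1 0 + σ (σ r 1 0) 0 0 = 0) ∧
      (σ (σ r 0 0) 1 1 + σ (σ r 1 0) 0 1 = D r) ∧
      (σ (σ r 0 1) 1 0 + σ (σ r 1 1) 0 0 = D r) ∧
      (σ (σ r 0 1) 1 1 + σ (σ r 1 1) 0 1 = 0) := by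
  refine aq_induction k _ ?_ ?_ ?_ ?_ ?_
  · intro c
    rw [AlgHom.commutes]
    simp [Matrix.algebraMap_matrix_apply, AlgHom.commutes]
  · refine ⟨?_, ?_, ?_, ?_⟩ <;> · simp [hσ1, hσ2, hD1, smul_smul, pow_two]; try module
  · refine ⟨?_, ?_, ?_, ?_⟩ <;> · simp [hσ1, hσ2, hD2, smul_smul, pow_two]; try module
  · rintro a b ⟨a1, a2, a3, a4⟩ ⟨b1, b2, b3, b4⟩
    simp only [map_add, Matrix.add_apply]
    refine ⟨?_, ?_, ?_, ?_⟩ <;>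
      · rw [add_add_add_comm]
        simp [a1, a2, a3, a4, b1, b2, b3, b4]
  · rintro a b ⟨a1, a2, a3, a4⟩ ⟨b1, b2, b3, b4⟩
    refine ⟨?_, ?_, ?_, ?_⟩ <;>
      simp only [map_mul, Matrix.mul_apply, Fin.sum_univ_two, map_add, Matrix.add_apply]
    · exact Eq.trans (by noncomm_ring)
        (aq_aux0 (σ (σ b 0 0) 0 0) (σ (σ b 1 0) 1 0) a1 a2 a3 a4 b1)
    · exact Eq.trans (by noncomm_ring)
        (aq_aux (σ (σ b 0 0) 0 1) (σ (σ b 1 0) 1 1) a1 a2 a3 a4 b2)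
    · exact Eq.trans (by noncomm_ring)
        (aq_aux (σ (σ b 0 1) 0 0) (σ (σ b 1 1) 1 0) a1 a2 a3 a4 b3)
    · exact Eq.trans (by noncomm_ring)
        (aq_aux0 (σ (σ b 0 1) 0 1) (σ (σ b 1 1) 1 1) a1 a2 a3 a4 b4)

lemma rel_smul₁ {k A : Type*} [Field k] [Ring A] [Algebra k A] (c : k) (x y : A)
    (hr : x * y + y * x = 0) : (c • y) * (-(c • x)) + (-(c • x)) * (c • y) = 0 := by
  rw [mul_neg, neg_mul, smul_mul_smul_comm, smul_mul_smul_comm, ← neg_add, ← smul_add,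
    show y * x + x * y = 0 by rw [add_comm]; exact hr, smul_zero, neg_zero]

lemma rel_smul₂ {k A : Type*} [Field k] [Ring A] [Algebra k A] (c : k) (x y : A)
    (hr : x * y + y * x = 0) : (-(c • y)) * (c • x) + (c • x) * (-(c • y)) = 0 := by
  rw [mul_neg, neg_mul, smul_mul_smul_comm, smul_mul_smul_comm, ← neg_add, ← smul_add,
    show y * x + x * y = 0 by rw [add_comm]; exact hr, smul_zero, neg_zero]

end AqAux

/-- Let `D` be the unique algebra endomorphism of `A` with `D(x₁) = h²x₂`,
`D(x₂) = −h²x₁`.  Then `σ₂₂∘σ₁₁ + σ₁₂∘σ₂₁ = D = σ₁₁∘σ₂₂ + σ₂₁∘σ₁₂` (so the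
determinant of `σ` for `P = (−1,0)` is `D`, a bijective algebra endomorphism), while
`σ₂₂∘σ₁₁ + σ₂₁∘σ₁₂ ≠ D` and `σ₁₁∘σ₂₂ + σ₁₂∘σ₂₁ ≠ D`. -/
theorem det_sigma_eq (k : Type*) [Field k] (h : k) (hh : h ≠ 0)
    (σ : Aq k →ₐ[k] Matrix (Fin 2) (Fin 2) (Aq k))
    (hσ1 : σ (aX₁ k) = h • !![aX₁ k + aX₂ k, aX₁ k; aX₂ k, 0])
    (hσ2 : σ (aX₂ k) = h • !![0, aX₁ k; -aX₂ k, -aX₁ k + aX₂ k]) :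
    (∃! D : Aq k →ₐ[k] Aq k,
      D (aX₁ k) = (h ^ 2) • aX₂ k ∧ D (aX₂ k) = -((h ^ 2) • aX₁ k)) ∧
    (∀ D : Aq k →ₐ[k] Aq k,
      (D (aX₁ k) = (h ^ 2) • aX₂ k ∧ D (aX₂ k) = -((h ^ 2) • aX₁ k)) →
      -- σ₂₂ ∘ σ₁₁ + σ₁₂ ∘ σ₂₁ = D
      (∀ r : Aq k, σ (σ r 0 0) 1 1 + σ (σ r 1 0) 0 1 = D r) ∧
      -- σ₁₁ ∘ σ₂₂ + σ₂₁ ∘ σ₁₂ = D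
      (∀ r : Aq k, σ (σ r 1 1) 0 0 + σ (σ r 0 1) 1 0 = D r) ∧
      -- D is a bijective algebra endomorphism
      Function.Bijective D ∧
      -- σ₂₂ ∘ σ₁₁ + σ₂₁ ∘ σ₁₂ ≠ D
      ¬(∀ r : Aq k, σ (σ r 0 0) 1 1 + σ (σ r 0 1) 1 0 = D r) ∧
      -- σ₁₁ ∘ σ₂₂ + σ₁₂ ∘ σ₂₁ ≠ D
      ¬(∀ r : Aq k, σ (σ r 1 1) 0 0 + σ (σ r 1 0) 0 1 = D r)) := by
  have h2 : (h : k) ^ 2 ≠ 0 := pow_ne_zero 2 hh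
  obtain ⟨D₀, hD₀1, hD₀2⟩ := aq_exists_hom k ((h ^ 2) • aX₂ k) (-((h ^ 2) • aX₁ k))
    (rel_smul₁ (h ^ 2) _ _ (aq_rel k))
  obtain ⟨φ, hφ1, hφ2⟩ := aq_exists_hom k (B := k) 1 0 (by ring)
  constructor
  · refine ⟨D₀, ⟨hD₀1, hD₀2⟩, fun E ⟨hE1, hE2⟩ => aq_hom_ext k ?_ ?_⟩
    · rw [hE1, hD₀1]
    · rw [hE2, hD₀2]
  · rintro D ⟨hD1, hD2⟩
    have key := aq_key k h σ hσ1 hσ2 D hD1 hD2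
    refine ⟨fun r => (key r).2.1, fun r => ?_, ?_, ?_, ?_⟩
    · rw [add_comm]; exact (key r).2.2.1
    · -- bijectivity
      obtain ⟨E, hEa, hEb⟩ := aq_exists_hom k (-(((h ^ 2)⁻¹) • aX₂ k)) (((h ^ 2)⁻¹) • aX₁ k)
        (rel_smul₂ ((h ^ 2)⁻¹) _ _ (aq_rel k))
      have hED : E.comp D = AlgHom.id k (Aq k) := by
        refine aq_hom_ext k ?_ ?_ <;>
          simp [hD1, hD2, hEa, hEb, smul_smul, inv_mul_cancel₀ h2, mul_inv_cancel₀ h2]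
      have hDE : D.comp E = AlgHom.id k (Aq k) := by
        refine aq_hom_ext k ?_ ?_ <;>
          simp [hD1, hD2, hEa, hEb, smul_smul, inv_mul_cancel₀ h2, mul_inv_cancel₀ h2]
      refine Function.bijective_iff_has_inverse.mpr ⟨E, fun x => ?_, fun x => ?_⟩
      · simpa using DFunLike.congr_fun hED x
      · simpa using DFunLike.congr_fun hDE x
    · intro hcon
      have hx := hcon (aX₁ k)
      rw [hD1] at hx
      have := congrArg φ hx
      simp [hσ1, hσ2, hφ1, hφ2, smul_smul] at this
      exact hh this
    · intro hcon
      have hx := hcon (aX₁ k)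
      rw [hD1] at hx
      have := congrArg φ hx
      simp [hσ1, hσ2, hφ1, hφ2, smul_smul] at this
      exact hh this
end
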